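/- arXiv:2604.08593 — 3 statements merged into one kernel-verified Lean document; each statement's English description precedes it below -/
import Mathlib

section
/- The function D(x) = -3·ln(x) + 6x - (3/2)x² - 11/2 has exactly one zero x* in the open interval (0,1), and this zero satisfies 0.25 < x* < 0.27. -/
open Real

private noncomputable def Dfun : ℝ → ℝ := fun x => -3 * Real.log x + 6 * x - (3 / 2) * x ^ 2 - 11 / 2

private lemma Dfun_hasDerivAt {x : ℝ} (hx : 0 < x) :
    HasDerivAt Dfun (-3 * x⁻¹ + 6 - 3 * x) x := by
  have h1 : HasDerivAt Real.log x⁻¹ x := Real.hasDerivAt_log hx.ne'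
  have : HasDerivAt (fun x : ℝ => -3 * Real.log x + 6 * x - (3 / 2) * x ^ 2 - 11 / 2)
      (-3 * x⁻¹ + 6 * 1 - (3 / 2) * (2 * x ^ 1) - 0) x := by
    exact (((h1.const_mul (-3)).add ((hasDerivAt_id x).const_mul 6)).sub
      ((hasDerivAt_pow 2 x).const_mul (3 / 2))).sub (hasDerivAt_const x _)
  convert this using 1
  · rfl
  ring

private lemma Dfun_anti : StrictAntiOn Dfun (Set.Ioo (0 : ℝ) 1) := by
  apply strictAntiOn_of_deriv_neg (convex_Ioo 0 1)
  · intro x hx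
    exact ((Dfun_hasDerivAt hx.1).continuousAt).continuousWithinAt
  · intro x hx
    rw [interior_Ioo] at hx
    rw [(Dfun_hasDerivAt hx.1).deriv]
    have h0 : (0:ℝ) < x := hx.1
    have h1 : x < 1 := hx.2
    have hne : (x - 1) ^ 2 > 0 := pow_pos (by linarith : (0:ℝ) < 1 - x) 2 |>.trans_eq (by ring)
    have : -3 * x⁻¹ + 6 - 3 * x = -3 * (x - 1) ^ 2 / x := by
      field_simp; ring
    rw [this]
    exact div_neg_of_neg_of_pos (by nlinarith) h0

private lemma log_two_bounds : (0.6931471803 : ℝ) < Real.log 2 ∧ Real.log 2 < 0.6931471808 :=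
  ⟨Real.log_two_gt_d9, Real.log_two_lt_d9⟩

private lemma Dfun_pos : 0 < Dfun 0.25 := by
  have h2 := Real.log_two_gt_d9
  have : Real.log 0.25 = -(2 * Real.log 2) := by
    rw [show (0.25 : ℝ) = 2 ^ (-2 : ℤ) by norm_num, Real.log_zpow]
    push_cast; ring
  unfold Dfun
  rw [this]
  nlinarith

private lemma Dfun_neg : Dfun 0.27 < 0 := by
  have h2 := Real.log_two_lt_d9
  have h27 : Real.log (25 / 27 : ℝ) ≤ 25 / 27 - 1 :=
    Real.log_le_sub_one_of_pos (by norm_num)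
  have hsplit : Real.log 0.27 = Real.log (25 / 27 : ℝ)⁻¹ - 2 * Real.log 2 := by
    rw [Real.log_inv, show (0.27 : ℝ) = (25 / 27 : ℝ)⁻¹ / 4 by norm_num,
      Real.log_div (by norm_num) (by norm_num), Real.log_inv,
      show (4 : ℝ) = 2 ^ 2 by norm_num, Real.log_pow]
    push_cast; ring
  have hinv : Real.log (25 / 27 : ℝ)⁻¹ = -Real.log (25 / 27 : ℝ) := Real.log_inv _
  unfold Dfun
  rw [hsplit, hinv]
  nlinarith

/-- The function `D(x) = -3 ln x + 6x - (3/2)x² - 11/2` has exactly one zero `x*`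
in `(0,1)`, and this zero satisfies `0.25 < x* < 0.27`. -/
theorem top3_threshold_unique_zero :
    ∃ x : ℝ, (x ∈ Set.Ioo (0 : ℝ) 1 ∧
        -3 * Real.log x + 6 * x - (3 / 2) * x ^ 2 - 11 / 2 = 0 ∧
        0.25 < x ∧ x < 0.27) ∧
      ∀ y ∈ Set.Ioo (0 : ℝ) 1,
        -3 * Real.log y + 6 * y - (3 / 2) * y ^ 2 - 11 / 2 = 0 → y = x := by
  have hcont : ContinuousOn Dfun (Set.Icc (0.25 : ℝ) 0.27) := by
    intro x hx
    exact ((Dfun_hasDerivAt (lt_of_lt_of_le (by norm_num) hx.1)).continuousAt).continuousWithinAt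
  have hiv := intermediate_value_Ioo' (by norm_num : (0.25 : ℝ) ≤ 0.27) hcont
  have h0 : (0 : ℝ) ∈ Set.Ioo (Dfun 0.27) (Dfun 0.25) := ⟨Dfun_neg, Dfun_pos⟩
  obtain ⟨x, hx, hfx⟩ := hiv h0
  have hx01 : x ∈ Set.Ioo (0 : ℝ) 1 := ⟨lt_trans (by norm_num) hx.1, lt_trans hx.2 (by norm_num)⟩
  refine ⟨x, ⟨hx01, hfx, hx.1, hx.2⟩, ?_⟩
  intro y hy hfy
  refine Dfun_anti.injOn hy hx01 ?_
  unfold Dfun at hfx ⊢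
  linarith
end

section
/- Let x* ∈ (0,1) be the unique zero of D(x) = -3·ln(x) + 6x - (3/2)x² - 11/2, and let P(x) = -3x·ln(x) + 3x² - x³/2 - 5x/2. Then P attains its maximum over (0,1] at x*, and 0.59 < P(x*) < 0.60. -/
open Real



noncomputable def Df (x : ℝ) : ℝ := -3 * Real.log x + 6 * x - (3 / 2) * x ^ 2 - 11 / 2
noncomputable def Pf (x : ℝ) : ℝ := -3 * x * Real.log x + 3 * x ^ 2 - x ^ 3 / 2 - 5 * x / 2

lemma hasDerivAt_Pf {x : ℝ} (hx : 0 < x) : HasDerivAt Pf (Df x) x := by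
  have h1 : HasDerivAt (fun y : ℝ => y * Real.log y) (Real.log x + 1) x := by
    have := (hasDerivAt_id x).mul (Real.hasDerivAt_log hx.ne')
    exact this.congr_deriv (by simp [mul_inv_cancel₀ hx.ne'])
  have h2 := (((h1.const_mul (-3 : ℝ)).add ((hasDerivAt_pow 2 x).const_mul (3 : ℝ))).sub
      ((hasDerivAt_pow 3 x).div_const 2)).sub (((hasDerivAt_id x).const_mul (5 : ℝ)).div_const 2)
  have hfun : Pf = fun y : ℝ =>
      -3 * (y * Real.log y) + 3 * y ^ 2 - y ^ 3 / 2 - 5 * y / 2 := by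
    funext y; simp [Pf]; ring
  rw [hfun]
  refine h2.congr_deriv ?_
  simp [Df]; ring

lemma hasDerivAt_Df {x : ℝ} (hx : 0 < x) : HasDerivAt Df (-3 * x⁻¹ + 6 - 3 * x) x := by
  have h := (((Real.hasDerivAt_log hx.ne').const_mul (-3 : ℝ)).add
      ((hasDerivAt_id x).const_mul (6 : ℝ))).sub (((hasDerivAt_pow 2 x).const_mul ((3:ℝ)/2)).add
      (hasDerivAt_const x ((11:ℝ)/2)))
  have hfun : Df = fun y : ℝ =>
      (-3 * Real.log y + 6 * y) - ((3/2) * y ^ 2 + 11/2) := by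
    funext y; simp [Df]; ring
  rw [hfun]
  refine h.congr_deriv ?_
  ring

lemma strictAntiOn_Df : StrictAntiOn Df (Set.Ioo (0:ℝ) 1) := by
  apply strictAntiOn_of_deriv_neg (convex_Ioo 0 1)
  · intro x hx
    exact (hasDerivAt_Df hx.1).continuousAt.continuousWithinAt
  · intro x hx
    rw [interior_Ioo] at hx
    rw [(hasDerivAt_Df hx.1).deriv]
    have h1 : x * x⁻¹ = 1 := mul_inv_cancel₀ hx.1.ne'
    have h2 : 0 < (1 - x) ^ 2 := pow_pos (by linarith [hx.2]) 2
    nlinarith [mul_pos hx.1 h2, hx.1, hx.2, h1]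

lemma log_2572_ub : Real.log (0.2572 : ℝ) < -1.3570 := by
  have h4 : Real.log (0.2572 : ℝ) = Real.log 1.0288 - Real.log 4 := by
    rw [← Real.log_div (by norm_num) (by norm_num)]; norm_num
  have hl4 : Real.log (4:ℝ) = 2 * Real.log 2 := by
    rw [show (4:ℝ) = 2 ^ 2 by norm_num, Real.log_pow]; push_cast; ring
  have h1 : Real.log (1.0288 : ℝ) ≤ 0.0288 := by
    have := Real.log_le_sub_one_of_pos (show (0:ℝ) < 1.0288 by norm_num)
    linarith
  have h2 := Real.log_two_gt_d9
  rw [h4, hl4]; linarith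

lemma log_2631_lb : (-1.3366 : ℝ) < Real.log (0.2631 : ℝ) := by
  have h4 : Real.log (0.2631 : ℝ) = Real.log 1.0524 - Real.log 4 := by
    rw [← Real.log_div (by norm_num) (by norm_num)]; norm_num
  have hl4 : Real.log (4:ℝ) = 2 * Real.log 2 := by
    rw [show (4:ℝ) = 2 ^ 2 by norm_num, Real.log_pow]; push_cast; ring
  have h1 : (0.0497 : ℝ) ≤ Real.log (1.0524 : ℝ) := by
    have h := Real.log_le_sub_one_of_pos (show (0:ℝ) < (1.0524)⁻¹ by norm_num)
    rw [Real.log_inv] at h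
    have : (1.0524 : ℝ)⁻¹ - 1 ≤ -0.0497 := by norm_num
    linarith
  have h2 := Real.log_two_lt_d9
  rw [h4, hl4]; linarith

lemma Df_pos : 0 < Df 0.2572 := by
  have := log_2572_ub
  simp only [Df]; nlinarith [this]

lemma Df_neg : Df 0.2631 < 0 := by
  have := log_2631_lb
  simp only [Df]; nlinarith [this]

/-- If `x*` is the unique zero in `(0,1)` of `D(x) = -3 ln x + 6x - (3/2)x² - 11/2`,
then `P(x) = -3x ln x + 3x² - x³/2 - 5x/2` attains its maximum over `(0,1]` at `x*`,
and `0.59 < P(x*) < 0.60`. -/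
theorem top3_optimal_value (xs : ℝ) (hxs : xs ∈ Set.Ioo (0 : ℝ) 1)
    (hzero : -3 * Real.log xs + 6 * xs - (3 / 2) * xs ^ 2 - 11 / 2 = 0)
    (huniq : ∀ y ∈ Set.Ioo (0 : ℝ) 1,
      -3 * Real.log y + 6 * y - (3 / 2) * y ^ 2 - 11 / 2 = 0 → y = xs) :
    let P : ℝ → ℝ := fun x => -3 * x * Real.log x + 3 * x ^ 2 - x ^ 3 / 2 - 5 * x / 2
    IsMaxOn P (Set.Ioc (0 : ℝ) 1) xs ∧ 0.59 < P xs ∧ P xs < 0.60 := by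
  intro P
  have hPf : P = Pf := rfl
  have hDxs : Df xs = 0 := hzero
  -- numeric bounds on xs
  have hlb : (0.2572 : ℝ) < xs := by
    by_contra h
    push_neg at h
    rcases eq_or_lt_of_le h with heq | hlt
    · rw [heq] at hDxs; linarith [Df_pos, hDxs]
    · have := strictAntiOn_Df hxs (by norm_num : (0.2572:ℝ) ∈ Set.Ioo (0:ℝ) 1) hlt
      rw [hDxs] at this
      linarith [Df_pos]
  have hub : xs < 0.2631 := by
    by_contra h
    push_neg at h
    rcases eq_or_lt_of_le h with heq | hlt
    · rw [← heq] at hDxs; linarith [Df_neg, hDxs]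
    · have := strictAntiOn_Df (by norm_num : (0.2631:ℝ) ∈ Set.Ioo (0:ℝ) 1) hxs hlt
      rw [hDxs] at this
      linarith [Df_neg]
  -- sign of Df on either side of xs
  have hDpos : ∀ y ∈ Set.Ioo (0:ℝ) xs, 0 < Df y := fun y hy => by
    have := strictAntiOn_Df ⟨hy.1, hy.2.trans hxs.2⟩ hxs hy.2
    rw [hDxs] at this; exact this
  have hDneg : ∀ y ∈ Set.Ioo xs 1, Df y < 0 := fun y hy => by
    have := strictAntiOn_Df hxs ⟨hxs.1.trans hy.1, hy.2⟩ hy.1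
    rw [hDxs] at this; exact this
  -- P monotone up to xs and antitone after
  have hmono : StrictMonoOn Pf (Set.Ioc (0:ℝ) xs) := by
    apply strictMonoOn_of_deriv_pos (convex_Ioc 0 xs)
    · intro y hy
      exact (hasDerivAt_Pf hy.1).continuousAt.continuousWithinAt
    · intro y hy
      rw [interior_Ioc] at hy
      rw [(hasDerivAt_Pf hy.1).deriv]
      exact hDpos y hy
  have hanti : StrictAntiOn Pf (Set.Icc xs 1) := by
    apply strictAntiOn_of_deriv_neg (convex_Icc xs 1)
    · intro y hy
      exact (hasDerivAt_Pf (hxs.1.trans_le hy.1)).continuousAt.continuousWithinAt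
    · intro y hy
      rw [interior_Icc] at hy
      rw [(hasDerivAt_Pf (hxs.1.trans hy.1)).deriv]
      exact hDneg y hy
  constructor
  · rw [hPf, isMaxOn_iff]
    intro y hy
    rcases le_or_gt y xs with hle | hgt
    · exact hmono.monotoneOn ⟨hy.1, hle⟩ ⟨hxs.1, le_refl xs⟩ hle
    · exact (hanti.antitoneOn ⟨le_refl xs, hxs.2.le⟩ ⟨hgt.le, hy.2⟩ hgt.le)
  · -- value bounds
    have hlog : Real.log xs = 2 * xs - xs ^ 2 / 2 - 11 / 6 := by linarith [hzero]
    have hval : P xs = xs ^ 3 - 3 * xs ^ 2 + 3 * xs := by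
      show -3 * xs * Real.log xs + 3 * xs ^ 2 - xs ^ 3 / 2 - 5 * xs / 2 = _
      rw [hlog]; ring
    rw [hval]
    constructor
    · nlinarith [hlb, hub, sq_nonneg (xs - 0.26), mul_pos (sub_pos.2 hlb) (sub_pos.2 hub)]
    · nlinarith [hlb, hub, sq_nonneg (xs - 0.26), mul_pos (sub_pos.2 hlb) (sub_pos.2 hub)]
end

section
/- Fix p ∈ [0,1] and x ∈ (0,1). Then the sequence n ↦ n·(1 - ((p + ⌊nx⌋)/(⌊nx⌋+1))·(1 - p/((1+p)(n - ⌊nx⌋)+1))) converges to (1-p)/x + p/((1+p)(1-x)) as n → ∞. -/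
open Filter

/-- For fixed `p ∈ [0,1]` and `x ∈ (0,1)`, the sequence
`n ↦ n·(1 - ((p+⌊nx⌋)/(⌊nx⌋+1))·(1 - p/((1+p)(n-⌊nx⌋)+1)))`
converges to `(1-p)/x + p/((1+p)(1-x))`. -/
theorem phi_h_limit (p x : ℝ) (hp : p ∈ Set.Icc (0 : ℝ) 1) (hx : x ∈ Set.Ioo (0 : ℝ) 1) :
    Tendsto (fun n : ℕ =>
        (n : ℝ) * (1 - ((p + (⌊(n : ℝ) * x⌋ : ℝ)) / ((⌊(n : ℝ) * x⌋ : ℝ) + 1)) *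
          (1 - p / ((1 + p) * ((n : ℝ) - (⌊(n : ℝ) * x⌋ : ℝ)) + 1))))
      atTop (nhds ((1 - p) / x + p / ((1 + p) * (1 - x)))) := by
  obtain ⟨hp0, hp1⟩ := hp
  obtain ⟨hx0, hx1⟩ := hx
  set k : ℕ → ℝ := fun n => (⌊(n : ℝ) * x⌋ : ℝ) with hkdef
  have h1n : Tendsto (fun n : ℕ => 1 / (n : ℝ)) atTop (nhds 0) :=
    tendsto_one_div_atTop_nhds_zero_nat
  -- floor ratio tends to x
  have hfl : Tendsto (fun n : ℕ => k n / n) atTop (nhds x) := by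
    have hlow : Tendsto (fun n : ℕ => x - 1 / (n : ℝ)) atTop (nhds x) := by
      simpa using tendsto_const_nhds.sub h1n
    refine tendsto_of_tendsto_of_tendsto_of_le_of_le' hlow tendsto_const_nhds ?_ ?_
    · filter_upwards [eventually_ge_atTop 1] with n hn
      have hn' : (0 : ℝ) < n := by exact_mod_cast Nat.lt_of_lt_of_le Nat.zero_lt_one hn
      have h := Int.sub_one_lt_floor ((n : ℝ) * x)
      have : x - 1 / n = ((n : ℝ) * x - 1) / n := by field_simp
      rw [this, div_le_div_iff₀ hn' hn']
      nlinarith [h]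
    · filter_upwards [eventually_ge_atTop 1] with n hn
      have hn' : (0 : ℝ) < n := by exact_mod_cast Nat.lt_of_lt_of_le Nat.zero_lt_one hn
      rw [div_le_iff₀ hn']
      have := Int.floor_le ((n : ℝ) * x)
      linarith
  -- A tends to 1
  have hA : Tendsto (fun n : ℕ => (p + k n) / (k n + 1)) atTop (nhds 1) := by
    have h : Tendsto (fun n : ℕ => (p * (1 / n) + k n / n) / (k n / n + 1 / n))
        atTop (nhds 1) := by
      have hnum : Tendsto (fun n : ℕ => p * (1 / (n : ℝ)) + k n / n) atTop (nhds x) := by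
        have := (h1n.const_mul p).add hfl
        simpa using this
      have hden : Tendsto (fun n : ℕ => k n / (n : ℝ) + 1 / n) atTop (nhds x) := by
        simpa using hfl.add h1n
      have := hnum.div hden hx0.ne'
      rw [div_self hx0.ne'] at this
      exact this
    refine h.congr' ?_
    filter_upwards [eventually_ge_atTop 1] with n hn
    have hn' : (0 : ℝ) < n := by exact_mod_cast Nat.lt_of_lt_of_le Nat.zero_lt_one hn
    field_simp
  -- n * B tends to p/((1+p)(1-x))
  have hden_ne : (1 + p) * (1 - x) ≠ 0 := by nlinarith
  have hB : Tendsto (fun n : ℕ => (n : ℝ) * (p / ((1 + p) * ((n : ℝ) - k n) + 1)))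
      atTop (nhds (p / ((1 + p) * (1 - x)))) := by
    have h : Tendsto (fun n : ℕ => p / ((1 + p) * (1 - k n / n) + 1 / n))
        atTop (nhds (p / ((1 + p) * (1 - x)))) := by
      have hd : Tendsto (fun n : ℕ => (1 + p) * (1 - k n / (n : ℝ)) + 1 / n)
          atTop (nhds ((1 + p) * (1 - x))) := by
        have h1 : Tendsto (fun n : ℕ => (1 : ℝ) - k n / n) atTop (nhds (1 - x)) :=
          tendsto_const_nhds.sub hfl
        have := (h1.const_mul (1 + p)).add h1n
        simpa using this
      exact tendsto_const_nhds.div hd hden_ne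
    refine h.congr' ?_
    filter_upwards [eventually_ge_atTop 1] with n hn
    have hn' : (0 : ℝ) < n := by exact_mod_cast Nat.lt_of_lt_of_le Nat.zero_lt_one hn
    field_simp
  -- n(1-p)/(k n + 1) tends to (1-p)/x
  have hC : Tendsto (fun n : ℕ => (n : ℝ) * (1 - p) / (k n + 1))
      atTop (nhds ((1 - p) / x)) := by
    have h : Tendsto (fun n : ℕ => (1 - p) / (k n / n + 1 / n))
        atTop (nhds ((1 - p) / x)) := by
      have hd : Tendsto (fun n : ℕ => k n / (n : ℝ) + 1 / n) atTop (nhds x) := by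
        simpa using hfl.add h1n
      exact tendsto_const_nhds.div hd hx0.ne'
    refine h.congr' ?_
    filter_upwards [eventually_ge_atTop 1] with n hn
    have hn' : (0 : ℝ) < n := by exact_mod_cast Nat.lt_of_lt_of_le Nat.zero_lt_one hn
    field_simp
  have main := hC.add (hA.mul hB)
  rw [one_mul] at main
  refine main.congr' ?_
  filter_upwards [eventually_ge_atTop 1] with n hn
  have hn' : (0 : ℝ) < n := by exact_mod_cast Nat.lt_of_lt_of_le Nat.zero_lt_one hn
  have hk0 : (0 : ℝ) ≤ k n := by
    simp only [hkdef]
    exact_mod_cast Int.floor_nonneg.mpr (by positivity)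
  have hk1 : k n + 1 ≠ 0 := by positivity
  have hkn : k n < n := by
    have h1 := Int.floor_le ((n : ℝ) * x)
    have : (n : ℝ) * x < n := by nlinarith
    exact lt_of_le_of_lt h1 this
  have hD : (1 + p) * ((n : ℝ) - k n) + 1 ≠ 0 := by nlinarith
  change _ = (n : ℝ) * (1 - ((p + k n) / (k n + 1)) * (1 - p / ((1 + p) * ((n : ℝ) - k n) + 1)))
  field_simp
  ring
end
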